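/- For α > 2 and A > 0, the integral over ℝ² of A/(A + |x|^α) dx equals π · A^{2/α} · Γ(1 + 2/α) · Γ(1 - 2/α), where |x| denotes the Euclidean norm. -/

import Mathlib

open Real MeasureTheory Set Metric

lemma beta_real {s : ℝ} (h0 : 0 < s) (h1 : s < 1) :
    ∫ x in (0:ℝ)..1, x ^ (s-1) * (1-x) ^ (-s) = Real.Gamma s * Real.Gamma (1-s) := by
  apply Complex.ofReal_injective
  have key : ((∫ x in (0:ℝ)..1, x ^ (s-1) * (1-x) ^ (-s) : ℝ) : ℂ)
      = Complex.betaIntegral s ((1-s : ℝ) : ℂ) := by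
    rw [← intervalIntegral.integral_ofReal, Complex.betaIntegral]
    apply intervalIntegral.integral_congr
    intro x hx
    rw [Set.uIcc_of_le (by norm_num : (0:ℝ) ≤ 1)] at hx
    have hx0 : (0:ℝ) ≤ x := hx.1
    have hx1 : (0:ℝ) ≤ 1 - x := by linarith [hx.2]
    push_cast
    rw [Complex.ofReal_cpow hx0, Complex.ofReal_cpow hx1]
    push_cast
    ring_nf
  rw [key]
  have h := Complex.Gamma_mul_Gamma_eq_betaIntegral (s := (s:ℂ)) (t := ((1-s : ℝ) : ℂ))
    (by simpa using h0) (by simpa using (by linarith : (0:ℝ) < 1 - s))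
  have hsum : (s:ℂ) + ((1-s:ℝ):ℂ) = 1 := by push_cast; ring
  rw [hsum, Complex.Gamma_one, one_mul] at h
  rw [← h, Complex.ofReal_mul, Complex.Gamma_ofReal, Complex.Gamma_ofReal]

lemma ioi_integral {s : ℝ} (h0 : 0 < s) (h1 : s < 1) :
    ∫ u in Ioi (0:ℝ), u ^ (s-1) / (1+u) = Real.Gamma s * Real.Gamma (1-s) := by
  set g : ℝ → ℝ := fun x => x ^ (s-1) * (1-x) ^ (-s) with hg
  have himg : (fun u : ℝ => u / (1+u)) '' Ioi 0 = Ioo 0 1 := by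
    ext x
    constructor
    · rintro ⟨u, hu, rfl⟩
      have hu0 : (0:ℝ) < u := mem_Ioi.mp hu
      have hu' : (0:ℝ) < 1 + u := by linarith
      constructor
      · positivity
      · rw [div_lt_one hu']; linarith
    · rintro ⟨hx0, hx1⟩
      have h1x : (0:ℝ) < 1 - x := by linarith
      refine ⟨x / (1-x), mem_Ioi.mpr (by positivity), ?_⟩
      field_simp
      ring
  have hderiv : ∀ u ∈ Ioi (0:ℝ), HasDerivWithinAt (fun u : ℝ => u / (1+u))
      (1 / (1+u)^2) (Ioi 0) u := by
    intro u hu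
    have hu' : (1:ℝ) + u ≠ 0 := by have := mem_Ioi.mp hu; positivity
    have : HasDerivAt (fun u : ℝ => u / (1+u)) ((1 * (1+u) - u * (0+1)) / (1+u)^2) u :=
      (hasDerivAt_id' u).div ((hasDerivAt_const u 1).add (hasDerivAt_id' u)) hu'
    rw [show (1 * (1+u) - u * (0+1)) / (1+u)^2 = 1 / (1+u)^2 by ring] at this
    exact this.hasDerivWithinAt
  have hinj : InjOn (fun u : ℝ => u / (1+u)) (Ioi 0) := by
    have : StrictMonoOn (fun u : ℝ => u / (1+u)) (Ioi 0) := by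
      intro x hx y hy hxy
      have hx' : (0:ℝ) < 1 + x := by linarith [mem_Ioi.mp hx]
      have hy' : (0:ℝ) < 1 + y := by linarith [mem_Ioi.mp hy]
      rw [div_lt_div_iff₀ hx' hy']
      nlinarith
    exact this.injOn
  have hcv := integral_image_eq_integral_abs_deriv_smul measurableSet_Ioi hderiv hinj g
  rw [himg] at hcv
  have hIoo : ∫ x in Ioo (0:ℝ) 1, g x = Real.Gamma s * Real.Gamma (1-s) := by
    rw [← beta_real h0 h1, intervalIntegral.integral_of_le (by norm_num : (0:ℝ) ≤ 1),
      ← integral_Ioc_eq_integral_Ioo]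
  rw [hIoo] at hcv
  rw [hcv]
  symm
  apply setIntegral_congr_fun measurableSet_Ioi
  intro u hu
  have hu0 : (0:ℝ) < u := mem_Ioi.mp hu
  have hv : (0:ℝ) < 1 + u := by linarith
  have e1 : (1:ℝ) - u / (1+u) = 1 / (1+u) := by field_simp; ring
  have e2 : ((1:ℝ) / (1+u)) ^ (-s) = (1+u) ^ s := by
    rw [one_div, Real.inv_rpow hv.le, ← Real.rpow_neg hv.le, neg_neg]
  have e3 : (u / (1+u)) ^ (s-1) = u ^ (s-1) / (1+u) ^ (s-1) :=
    Real.div_rpow hu0.le hv.le (s-1)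
  have e5 : ((1:ℝ)+u) ^ s = (1+u) ^ (s-1) * (1+u) := by
    rw [← Real.rpow_add_one hv.ne' (s-1)]
    norm_num
  have hne : ((1:ℝ)+u) ^ (s-1) ≠ 0 := (Real.rpow_pos_of_pos hv _).ne'
  simp only [hg, smul_eq_mul]
  rw [e1, e2, e3, e5, abs_of_nonneg (by positivity : (0:ℝ) ≤ 1 / (1+u)^2)]
  field_simp

/-- For `α > 2` and `A > 0`, the integral over `ℝ²` of `A / (A + |x|^α)` equals
`π · A^(2/α) · Γ(1 + 2/α) · Γ(1 - 2/α)`. -/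
theorem planar_integral_identity (α A : ℝ) (hα : 2 < α) (hA : 0 < A) :
    ∫ x : EuclideanSpace ℝ (Fin 2), A / (A + ‖x‖ ^ α) =
      π * A ^ (2 / α) * Real.Gamma (1 + 2 / α) * Real.Gamma (1 - 2 / α) := by
  have hα0 : (0:ℝ) < α := by linarith
  have hs0 : (0:ℝ) < 2/α := by positivity
  have hs1 : 2/α < 1 := by rw [div_lt_one hα0]; linarith
  -- polar coordinates
  have hpolar := MeasureTheory.integral_fun_norm_addHaar
    (volume : Measure (EuclideanSpace ℝ (Fin 2))) (fun r => A / (A + r ^ α))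
  have hrank : Module.finrank ℝ (EuclideanSpace ℝ (Fin 2)) = 2 := by
    simp [finrank_euclideanSpace]
  rw [hrank] at hpolar
  have hball : (volume.real (ball (0 : EuclideanSpace ℝ (Fin 2)) 1) : ℝ) = π := by
    rw [measureReal_def, EuclideanSpace.volume_ball]
    norm_num [Real.Gamma_two, Real.sq_sqrt Real.pi_nonneg, ENNReal.toReal_ofReal Real.pi_nonneg]
  rw [hball] at hpolar
  rw [hpolar]
  -- substitution y = x^(1/α)
  have hsub := MeasureTheory.integral_comp_rpow_Ioi_of_pos
    (g := fun y : ℝ => y ^ (2 - 1) • (A / (A + y ^ α))) (p := 1/α) (by positivity)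
  rw [← hsub]
  have hstep : ∀ x ∈ Ioi (0:ℝ),
      (1/α * x ^ (1/α - 1)) • (x ^ (1/α)) ^ (2-1) • (A / (A + (x ^ (1/α)) ^ α))
        = (A/α) * (x ^ (2/α - 1) / (A + x)) := by
    intro x hx
    have hx0 : (0:ℝ) < x := mem_Ioi.mp hx
    have h1 : (x ^ (1/α)) ^ α = x := by
      rw [← Real.rpow_mul hx0.le, one_div_mul_cancel hα0.ne', Real.rpow_one]
    have h2 : x ^ (1/α - 1) * x ^ (1/α) = x ^ (2/α - 1) := by
      rw [← Real.rpow_add hx0]; ring_nf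
    simp only [smul_eq_mul, pow_one, h1]
    rw [← h2]; ring
  rw [setIntegral_congr_fun measurableSet_Ioi hstep]
  rw [MeasureTheory.integral_const_mul]
  -- substitution x = A * u
  have hscale := MeasureTheory.integral_comp_mul_left_Ioi
    (g := fun x : ℝ => x ^ (2/α - 1) / (A + x)) 0 hA
  rw [mul_zero] at hscale
  have hAg : ∀ u ∈ Ioi (0:ℝ),
      (A * u) ^ (2/α - 1) / (A + A * u) = A ^ (2/α - 1) / A * (u ^ (2/α - 1) / (1 + u)) := by
    intro u hu
    have hu0 : (0:ℝ) < u := mem_Ioi.mp hu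
    rw [Real.mul_rpow hA.le hu0.le, show A + A * u = A * (1 + u) by ring]
    field_simp
  rw [setIntegral_congr_fun measurableSet_Ioi hAg, MeasureTheory.integral_const_mul,
    ioi_integral hs0 hs1] at hscale
  have hint : ∫ x in Ioi (0:ℝ), x ^ (2/α - 1) / (A + x)
      = A * (A ^ (2/α - 1) / A * (Real.Gamma (2/α) * Real.Gamma (1 - 2/α))) := by
    have h2 := congrArg (fun t => A * t) hscale.symm
    simp only [smul_eq_mul, ← mul_assoc, mul_inv_cancel₀ hA.ne', one_mul] at h2
    rw [h2]; ring
  rw [hint]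
  have hA2 : A * A ^ (2/α - 1) = A ^ (2/α) := by
    have h3 := Real.rpow_add hA 1 (2/α - 1)
    rw [Real.rpow_one] at h3
    rw [← h3]
    norm_num
  have hG : Real.Gamma (1 + 2/α) = (2/α) * Real.Gamma (2/α) := by
    rw [add_comm, Real.Gamma_add_one hs0.ne']
  rw [hG]
  rw [← hA2]
  simp only [nsmul_eq_mul, smul_eq_mul, Nat.cast_ofNat]
  field_simp
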